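/- The Fock space V_q(n) is an irreducible module over the deformed Clifford algebra Cl_q(n): any nonzero submodule equals V_q(n). -/

import Mathlib

open Finset in
/-- The sign `(-1)^{r_1 + ⋯ + r_{i-1}}` appearing in the Fock space action. -/
def fockSgn {K : Type*} [Field K] {n : ℕ} (r : Fin n → Fin 2) (i : Fin n) : K :=
  (-1) ^ (∑ j : Fin n, if (j : ℕ) < (i : ℕ) then ((r j : ℕ)) else 0)

/-- The Fock space `V_q(n)`, with basis `|r⟩` for `r ∈ {0,1}ⁿ`, realised as the space of
`K`-valued functions on `{0,1}ⁿ` (`f r` is the coefficient of `|r⟩`). -/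
def FockV (K : Type*) [Field K] (n : ℕ) : Type _ := (Fin n → Fin 2) → K

noncomputable instance (K : Type*) [Field K] (n : ℕ) : AddCommGroup (FockV K n) :=
  inferInstanceAs (AddCommGroup ((Fin n → Fin 2) → K))
noncomputable instance (K : Type*) [Field K] (n : ℕ) : Module K (FockV K n) :=
  inferInstanceAs (Module K ((Fin n → Fin 2) → K))

/-- The operator `ψ_i` on the Fock space: `ψ_i |r⟩ = (-1)^{r_1+⋯+r_{i-1}} |r - e_i⟩`. -/
def ψop {K : Type*} [Field K] {n : ℕ} (i : Fin n) (f : FockV K n) : FockV K n :=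
  fun r => if r i = 0 then fockSgn r i * f (Function.update r i 1) else 0

/-- The operator `ψ_i†` on the Fock space: `ψ_i† |r⟩ = (-1)^{r_1+⋯+r_{i-1}} |r + e_i⟩`. -/
def ψdop {K : Type*} [Field K] {n : ℕ} (i : Fin n) (f : FockV K n) : FockV K n :=
  fun r => if r i = 1 then fockSgn r i * f (Function.update r i 0) else 0

/-- The operator `v_i` on the Fock space: `v_i |r⟩ = q^{-r_i} |r⟩`. -/
def vop {K : Type*} [Field K] {n : ℕ} (q : K) (i : Fin n) (f : FockV K n) : FockV K n :=
  fun r => q⁻¹ ^ ((r i : ℕ)) * f r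

/-- The operator `v_i⁻¹` on the Fock space: `v_i⁻¹ |r⟩ = q^{r_i} |r⟩`. -/
def vinvop {K : Type*} [Field K] {n : ℕ} (q : K) (i : Fin n) (f : FockV K n) : FockV K n :=
  fun r => q ^ ((r i : ℕ)) * f r

section Aux

variable {K : Type*} [Field K] {n : ℕ}

/-- Delta function at `r`. -/
def fockδ (K : Type*) [Field K] {n : ℕ} (r : Fin n → Fin 2) : FockV K n :=
  fun s => if s = r then 1 else 0

lemma fockSgn_update (r : Fin n → Fin 2) (i : Fin n) (b : Fin 2) :
    fockSgn (K := K) (Function.update r i b) i = fockSgn r i := by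
  unfold fockSgn
  congr 1
  refine Finset.sum_congr rfl fun j _ => ?_
  by_cases h : (j : ℕ) < (i : ℕ)
  · have hji : j ≠ i := fun hji => by simp [hji] at h
    simp [h, Function.update_of_ne hji]
  · simp [h]

lemma fockSgn_sq (r : Fin n → Fin 2) (i : Fin n) :
    fockSgn (K := K) r i * fockSgn r i = 1 := by
  unfold fockSgn
  rw [← mul_pow]
  norm_num

lemma fin2_cases (a : Fin 2) : a = 0 ∨ a = 1 := by omega

/-- Projection onto the coordinates with `r i = 1`. -/
lemma proj1_eq (i : Fin n) (f : FockV K n) :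
    ψdop i (ψop i f) = fun r => if r i = 1 then f r else 0 := by
  funext r
  unfold ψdop ψop
  by_cases h : r i = 1
  · have h0 : Function.update r i (0 : Fin 2) i = 0 := Function.update_self i 0 r
    have hupd : Function.update (Function.update r i (0 : Fin 2)) i 1 = r := by
      rw [Function.update_idem, ← h, Function.update_eq_self]
    simp only [h, if_true, h0, if_true, hupd, fockSgn_update]
    rw [← mul_assoc, fockSgn_sq, one_mul]
  · simp [h]

/-- Projection onto the coordinates with `r i = 0`. -/
lemma proj0_eq (i : Fin n) (f : FockV K n) :
    ψop i (ψdop i f) = fun r => if r i = 0 then f r else 0 := by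
  funext r
  unfold ψdop ψop
  by_cases h : r i = 0
  · have h1 : Function.update r i (1 : Fin 2) i = 1 := Function.update_self i 1 r
    have hupd : Function.update (Function.update r i (1 : Fin 2)) i 0 = r := by
      rw [Function.update_idem, ← h, Function.update_eq_self]
    simp only [h, if_true, h1, if_true, hupd, fockSgn_update]
    rw [← mul_assoc, fockSgn_sq, one_mul]
  · simp [h]

end Aux

/-- The Fock space `V_q(n)` is irreducible as a module over the deformed
Clifford algebra `Cl_q(n)`: any nonzero subspace invariant under all the operators
`ψ_i`, `ψ_i†`, `v_i^{±1}` is the whole space. -/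
theorem stmt8 {K : Type*} [Field K] (q : K) (hq0 : q ≠ 0) (hq1 : q ^ 2 ≠ 1) (n : ℕ)
    (W : Submodule K (FockV K n))
    (hψ : ∀ (i : Fin n) (f : FockV K n), f ∈ W → ψop i f ∈ W)
    (hψd : ∀ (i : Fin n) (f : FockV K n), f ∈ W → ψdop i f ∈ W)
    (hv : ∀ (i : Fin n) (f : FockV K n), f ∈ W → vop q i f ∈ W)
    (hvinv : ∀ (i : Fin n) (f : FockV K n), f ∈ W → vinvop q i f ∈ W)
    (hW : W ≠ ⊥) : W = ⊤ := by
  classical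
  obtain ⟨f, hfW, hf0⟩ := Submodule.exists_mem_ne_zero_of_ne_bot hW
  obtain ⟨r0, hr0⟩ : ∃ r0, f r0 ≠ 0 := by
    by_contra h
    push_neg at h
    exact hf0 (funext h)
  -- Step 1: projections onto a fixed value of a coordinate preserve W
  have hproj : ∀ (i : Fin n) (g : FockV K n), g ∈ W →
      (fun r => if r i = r0 i then g r else 0) ∈ W := by
    intro i g hg
    rcases fin2_cases (r0 i) with h | h
    · rw [h, ← proj0_eq]
      exact hψ i _ (hψd i _ hg)
    · rw [h, ← proj1_eq]
      exact hψd i _ (hψ i _ hg)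
  -- Step 2: cut f down to its value at r0
  have key : ∀ s : Finset (Fin n),
      (fun r => if ∀ i ∈ s, r i = r0 i then f r else 0) ∈ W := by
    intro s
    induction s using Finset.induction_on with
    | empty => simp; exact hfW
    | @insert a s ha ih =>
      have h1 := hproj a _ ih
      have h2 : (fun r => if r a = r0 a then
          (if ∀ i ∈ s, r i = r0 i then f r else 0) else 0)
          = fun r => if ∀ i ∈ insert a s, r i = r0 i then f r else 0 := by
        funext r
        by_cases hra : r a = r0 a
        · by_cases hrs : ∀ i ∈ s, r i = r0 i
          · have : ∀ i ∈ insert a s, r i = r0 i := by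
              intro i hi
              rcases Finset.mem_insert.mp hi with h | h
              · subst h; exact hra
              · exact hrs i h
            simp [hra, hrs, this]
          · have : ¬ ∀ i ∈ insert a s, r i = r0 i := fun hh =>
              hrs fun i hi => hh i (Finset.mem_insert_of_mem hi)
            simp [hra, hrs, this]
        · have : ¬ ∀ i ∈ insert a s, r i = r0 i := fun hh =>
            hra (hh a (Finset.mem_insert_self a s))
          simp [hra, this]
      rw [h2] at h1
      exact h1
  -- Step 3: δ_{r0} ∈ W
  have hdelta0 : fockδ K r0 ∈ W := by
    have h1 := key Finset.univ
    have h2 : (fun r => if ∀ i ∈ Finset.univ, r i = r0 i then f r else 0)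
        = f r0 • fockδ K r0 := by
      funext r
      by_cases h : r = r0
      · subst h
        show (if ∀ i ∈ Finset.univ, r i = r i then f r else 0)
            = f r • (if r = r then (1:K) else 0)
        rw [if_pos (fun i _ => rfl), if_pos rfl, smul_eq_mul, mul_one]
      · have hne : ¬ ∀ i ∈ Finset.univ, r i = r0 i := fun hh =>
          h (funext fun i => hh i (Finset.mem_univ i))
        show (if ∀ i ∈ Finset.univ, r i = r0 i then f r else 0)
            = f r0 • (if r = r0 then (1:K) else 0)
        rw [if_neg hne, if_neg h, smul_zero]
    rw [h2] at h1
    have h3 := W.smul_mem (f r0)⁻¹ h1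
    rwa [smul_smul, inv_mul_cancel₀ hr0, one_smul] at h3
  -- Step 4: flipping one coordinate of a delta stays in W
  have hflip : ∀ (r : Fin n → Fin 2) (i : Fin n) (b : Fin 2),
      fockδ K r ∈ W → fockδ K (Function.update r i b) ∈ W := by
    intro r i b hr
    by_cases hb : b = r i
    · subst hb
      rwa [Function.update_eq_self]
    · rcases fin2_cases (r i) with h | h
      · -- r i = 0, b = 1 : use ψdop
        have hb1 : b = 1 := by
          rcases fin2_cases b with h' | h'
          · exact absurd (h'.trans h.symm) hb
          · exact h'
        subst hb1
        have heq : ψdop i (fockδ K r) = fockSgn (K := K) r i • fockδ K (Function.update r i 1) := by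
          funext s
          show (if s i = 1 then fockSgn s i * (if Function.update s i 0 = r then (1:K) else 0)
              else 0) = fockSgn (K := K) r i • (if s = Function.update r i 1 then (1:K) else 0)
          by_cases hs : s = Function.update r i 1
          · subst hs
            have h1 : Function.update r i (1 : Fin 2) i = 1 := Function.update_self i 1 r
            have h2 : Function.update (Function.update r i (1:Fin 2)) i 0 = r := by
              rw [Function.update_idem, ← h, Function.update_eq_self]
            simp [h1, h2, fockSgn_update]
          · by_cases hs1 : s i = 1
            · have hne : Function.update s i 0 ≠ r := by
                intro hcon
                apply hs
                have : Function.update (Function.update s i (0:Fin 2)) i 1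
                    = Function.update r i 1 := by rw [hcon]
                rw [Function.update_idem, ← hs1, Function.update_eq_self] at this
                rw [this, hs1]
              simp [hs1, hne, hs]
            · simp [hs1, hs]
        have hmem := hψd i _ hr
        rw [heq] at hmem
        have h3 := W.smul_mem (fockSgn (K := K) r i) hmem
        rwa [smul_smul, fockSgn_sq, one_smul] at h3
      · -- r i = 1, b = 0 : use ψop
        have hb0 : b = 0 := by
          rcases fin2_cases b with h' | h'
          · exact h'
          · exact absurd (h'.trans h.symm) hb
        subst hb0
        have heq : ψop i (fockδ K r) = fockSgn (K := K) r i • fockδ K (Function.update r i 0) := by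
          funext s
          show (if s i = 0 then fockSgn s i * (if Function.update s i 1 = r then (1:K) else 0)
              else 0) = fockSgn (K := K) r i • (if s = Function.update r i 0 then (1:K) else 0)
          by_cases hs : s = Function.update r i 0
          · subst hs
            have h1 : Function.update r i (0 : Fin 2) i = 0 := Function.update_self i 0 r
            have h2 : Function.update (Function.update r i (0:Fin 2)) i 1 = r := by
              rw [Function.update_idem, ← h, Function.update_eq_self]
            simp [h1, h2, fockSgn_update]
          · by_cases hs0 : s i = 0
            · have hne : Function.update s i 1 ≠ r := by
                intro hcon
                apply hs
                have : Function.update (Function.update s i (1:Fin 2)) i 0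
                    = Function.update r i 0 := by rw [hcon]
                rw [Function.update_idem, ← hs0, Function.update_eq_self] at this
                rw [this, hs0]
              simp [hs0, hne, hs]
            · simp [hs0, hs]
        have hmem := hψ i _ hr
        rw [heq] at hmem
        have h3 := W.smul_mem (fockSgn (K := K) r i) hmem
        rwa [smul_smul, fockSgn_sq, one_smul] at h3
  -- Step 5: all deltas are in W
  have hall : ∀ r : Fin n → Fin 2, fockδ K r ∈ W := by
    have main : ∀ s : Finset (Fin n), ∀ r : Fin n → Fin 2,
        (∀ i, r i ≠ r0 i → i ∈ s) → fockδ K r ∈ W := by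
      intro s
      induction s using Finset.induction_on with
      | empty =>
        intro r hr
        have : r = r0 := funext fun i => by
          by_contra h
          exact absurd (hr i h) (Finset.notMem_empty i)
        rw [this]; exact hdelta0
      | @insert a s ha ih =>
        intro r hr
        have h1 : fockδ K (Function.update r a (r0 a)) ∈ W := by
          apply ih
          intro i hi
          by_cases hia : i = a
          · subst hia
            rw [Function.update_self] at hi
            exact absurd rfl hi
          · rw [Function.update_of_ne hia] at hi
            rcases Finset.mem_insert.mp (hr i hi) with h | h
            · exact absurd h hia
            · exact h
        have h2 := hflip _ a (r a) h1
        rwa [Function.update_idem, Function.update_eq_self] at h2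
    intro r
    exact main Finset.univ r fun i _ => Finset.mem_univ i
  -- Step 6: every element is a combination of deltas
  have hsupp : ∀ (t : Finset (Fin n → Fin 2)) (g : FockV K n),
      (∀ r, r ∉ t → g r = 0) → g ∈ W := by
    intro t
    induction t using Finset.induction_on with
    | empty =>
      intro g hg
      have : g = 0 := funext fun r => hg r (Finset.notMem_empty r)
      rw [this]; exact W.zero_mem
    | @insert a t ha ih =>
      intro g hg
      set g' : FockV K n := fun r => if r = a then 0 else g r with hg'
      have hg'W : g' ∈ W := by
        apply ih
        intro r hrt
        by_cases hra : r = a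
        · simp [hg', hra]
        · have : r ∉ insert a t := fun hc => by
            rcases Finset.mem_insert.mp hc with h | h
            · exact hra h
            · exact hrt h
          simp [hg', hra, hg r this]
      have hdecomp : g = g a • fockδ K a + g' := by
        funext r
        show g r = g a • (if r = a then (1:K) else 0) + (if r = a then 0 else g r)
        by_cases hra : r = a
        · subst hra; simp
        · simp [hra]
      rw [hdecomp]
      exact W.add_mem (W.smul_mem _ (hall a)) hg'W
  rw [eq_top_iff]
  intro g _
  exact hsupp Finset.univ g fun r hr => absurd (Finset.mem_univ r) hr
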